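/- Let Ω̂ ⊆ ℝ² be a measurable set, let F : ℝ² → ℝ² be twice continuously differentiable, injective on Ω̂, with det(DF(x̂)) > 0 for all x̂ ∈ Ω̂, and let u, v : ℝ² → ℝ² be continuously differentiable. Define the covariant Piola pullbacks û(x̂) = (DF(x̂))ᵀ u(F(x̂)) and v̂(x̂) = (DF(x̂))ᵀ v(F(x̂)). Then ∫_{F(Ω̂)} (curl u)(x) · (curl v)(x) dx = ∫_{Ω̂} (1 / det(DF(x̂))) (curl û)(x̂) · (curl v̂)(x̂) dx̂, where for a vector field w = (w₁, w₂) the scalar curl is curl w = ∂₁ w₂ − ∂₂ w₁ and integration is with respect to Lebesgue measure. -/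

import Mathlib

open MeasureTheory ContinuousLinearMap

/-- Jacobian matrix of a map `F : ℝ² → ℝ²` at a point. -/
noncomputable def jacobian2 (F : (Fin 2 → ℝ) → (Fin 2 → ℝ)) (x : Fin 2 → ℝ) :
    Matrix (Fin 2) (Fin 2) ℝ :=
  Matrix.of fun i j => fderiv ℝ F x (Pi.single j 1) i

/-- Scalar curl of a planar vector field: curl v = ∂₁v₂ − ∂₂v₁. -/
noncomputable def scalarCurl (v : (Fin 2 → ℝ) → (Fin 2 → ℝ)) (x : Fin 2 → ℝ) : ℝ :=
  fderiv ℝ (fun y => v y 1) x (Pi.single 0 1) - fderiv ℝ (fun y => v y 0) x (Pi.single 1 1)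

lemma apply_decomp (T : (Fin 2 → ℝ) →L[ℝ] (Fin 2 → ℝ)) (w : Fin 2 → ℝ) :
    T w = w 0 • T (Pi.single 0 1) + w 1 • T (Pi.single 1 1) := by
  have h : w = w 0 • (Pi.single 0 1 : Fin 2 → ℝ) + w 1 • (Pi.single 1 1 : Fin 2 → ℝ) := by
    funext k; fin_cases k <;> simp [Pi.single_apply]
  conv_lhs => rw [h]
  rw [map_add, T.map_smul, T.map_smul]

lemma curl_hat (F : (Fin 2 → ℝ) → (Fin 2 → ℝ)) (hF : ContDiff ℝ 2 F)
    (u : (Fin 2 → ℝ) → (Fin 2 → ℝ)) (hu : ContDiff ℝ 1 u)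
    (w : (Fin 2 → ℝ) → (Fin 2 → ℝ))
    (hw : ∀ x, w x = (jacobian2 F x).transpose.mulVec (u (F x))) (x : Fin 2 → ℝ) :
    scalarCurl w x = (jacobian2 F x).det * scalarCurl u (F x) := by
  set e : Fin 2 → (Fin 2 → ℝ) := fun i => Pi.single i 1 with he
  have hFdiff : Differentiable ℝ F := hF.differentiable (by norm_num)
  set A := fderiv ℝ F x with hA'
  set B := fderiv ℝ (fderiv ℝ F) x with hB'
  set U := fderiv ℝ u (F x) with hU'
  have hB : HasFDerivAt (fderiv ℝ F) B x :=
    (((hF.fderiv_right (m := 1) (le_refl 2)).differentiable one_ne_zero) x).hasFDerivAt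
  have hA : HasFDerivAt F A x := (hFdiff x).hasFDerivAt
  have hU : HasFDerivAt u U (F x) := ((hu.differentiable one_ne_zero) (F x)).hasFDerivAt
  -- derivative of each term
  have h1 : ∀ i j : Fin 2, HasFDerivAt (fun y => fderiv ℝ F y (e i) j)
      (((ContinuousLinearMap.proj j).comp
        ((ContinuousLinearMap.apply ℝ (Fin 2 → ℝ) (e i)))).comp B) x := by
    intro i j
    exact (((ContinuousLinearMap.proj j).comp
        ((ContinuousLinearMap.apply ℝ (Fin 2 → ℝ) (e i)))).hasFDerivAt).comp x hB
  have h2 : ∀ j : Fin 2, HasFDerivAt (fun y => u (F y) j)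
      ((ContinuousLinearMap.proj j).comp (U.comp A)) x := by
    intro j
    exact ((ContinuousLinearMap.proj j).hasFDerivAt).comp x (hU.comp x hA)
  have hwfun : ∀ i : Fin 2, (fun y => w y i)
      = fun y => ∑ j : Fin 2, fderiv ℝ F y (e i) j * u (F y) j := by
    intro i
    funext y
    simp [hw y, jacobian2, Matrix.mulVec, dotProduct, he]
  have hD : ∀ i : Fin 2, HasFDerivAt (fun y => w y i)
      (∑ j : Fin 2, ((fderiv ℝ F x (e i) j) • ((ContinuousLinearMap.proj j).comp (U.comp A))
        + (u (F x) j) • (((ContinuousLinearMap.proj j).comp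
            ((ContinuousLinearMap.apply ℝ (Fin 2 → ℝ) (e i)))).comp B))) x := by
    intro i
    rw [hwfun i]
    exact HasFDerivAt.fun_sum fun j _ => (h1 i j).mul (h2 j)
  have hsymm : B (e 0) (e 1) = B (e 1) (e 0) :=
    second_derivative_symmetric (fun y => (hFdiff y).hasFDerivAt) hB _ _
  have hcurlu : ∀ (j k : Fin 2), fderiv ℝ (fun y => u y j) (F x) (e k) = U (e k) j := by
    intro j k
    have hj : HasFDerivAt (fun y => u y j) ((ContinuousLinearMap.proj j).comp U) (F x) := by
      have := ((ContinuousLinearMap.proj (R := ℝ) (φ := fun _ : Fin 2 => ℝ)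
        j).hasFDerivAt).comp (F x) hU
      exact this
    rw [hj.fderiv]
    rfl
  have hscw : scalarCurl w x =
      (∑ j : Fin 2, (A (e 1) j * U (A (e 0)) j + u (F x) j * B (e 0) (e 1) j))
      - (∑ j : Fin 2, (A (e 0) j * U (A (e 1)) j + u (F x) j * B (e 1) (e 0) j)) := by
    rw [scalarCurl, (hD 1).fderiv, (hD 0).fderiv]
    simp [he, mul_comm]
    rfl
  rw [hscw, scalarCurl, hcurlu, hcurlu]
  rw [apply_decomp U (A (e 0)), apply_decomp U (A (e 1))]
  have hdet : (jacobian2 F x).det = A (e 0) 0 * A (e 1) 1 - A (e 1) 0 * A (e 0) 1 := by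
    rw [Matrix.det_fin_two]; simp [jacobian2, he, hA']
  rw [hdet, hsymm]
  simp only [Fin.sum_univ_two, Pi.add_apply, Pi.smul_apply, smul_eq_mul, he]
  ring

lemma fderiv_det_eq (F : (Fin 2 → ℝ) → (Fin 2 → ℝ)) (x : Fin 2 → ℝ) :
    (fderiv ℝ F x).det = (jacobian2 F x).det := by
  have hmat : jacobian2 F x
      = LinearMap.toMatrix' ((fderiv ℝ F x) : (Fin 2 → ℝ) →ₗ[ℝ] (Fin 2 → ℝ)) := by
    ext i j
    have harg : (Pi.single j 1 : Fin 2 → ℝ) = fun j' => if j' = j then 1 else 0 := by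
      funext j'; simp [Pi.single_apply]
    simp [jacobian2, LinearMap.toMatrix'_apply, harg]
  rw [hmat, LinearMap.det_toMatrix']

/-- Transformation of the curl-curl form under the covariant Piola mapping in 2D:
∫_{F(Ω̂)} curl u · curl v dx = ∫_{Ω̂} (1/det DF) curl û · curl v̂ dx̂. -/
theorem piola_curl_integral_transform_2d
    (Ω : Set (Fin 2 → ℝ)) (hΩ : MeasurableSet Ω)
    (F : (Fin 2 → ℝ) → (Fin 2 → ℝ)) (hF : ContDiff ℝ 2 F)
    (hinj : Set.InjOn F Ω)
    (hdet : ∀ x ∈ Ω, 0 < (jacobian2 F x).det)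
    (u v : (Fin 2 → ℝ) → (Fin 2 → ℝ))
    (hu : ContDiff ℝ 1 u) (hv : ContDiff ℝ 1 v)
    (uhat vhat : (Fin 2 → ℝ) → (Fin 2 → ℝ))
    (huhat : ∀ x : Fin 2 → ℝ, uhat x = (jacobian2 F x).transpose.mulVec (u (F x)))
    (hvhat : ∀ x : Fin 2 → ℝ, vhat x = (jacobian2 F x).transpose.mulVec (v (F x))) :
    ∫ x in F '' Ω, scalarCurl u x * scalarCurl v x =
      ∫ x in Ω, (1 / (jacobian2 F x).det) * (scalarCurl uhat x * scalarCurl vhat x) := by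
  rw [integral_image_eq_integral_abs_det_fderiv_smul volume hΩ
    (fun x _ => ((hF.differentiable (by norm_num) x).hasFDerivAt).hasFDerivWithinAt) hinj
    (fun x => scalarCurl u x * scalarCurl v x)]
  refine setIntegral_congr_fun hΩ fun x hx => ?_
  have hdx := hdet x hx
  rw [curl_hat F hF u hu uhat huhat x, curl_hat F hF v hv vhat hvhat x,
    fderiv_det_eq F x, abs_of_pos hdx, smul_eq_mul]
  field_simp
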